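/- Let V=(d,Q,Δ) be a VASS, ρ a path, and v,v'∈ℕ^d with v'≥v componentwise. Suppose the classical run induced by ρ from s(v') exists and ends in t(w), and suppose that every coordinate j∈{1,…,d} either hits 0 in this classical run or satisfies v'[j]=v[j]. Then the monus run induced by ρ from s(v) also ends in t(w). -/

import Mathlib

/-- A transition of a `d`-dimensional VASS over state set `Q`:
a source state, an update vector in `ℤ^d`, and a target state. -/
abbrev VTrans (d : ℕ) (Q : Type*) := Q × (Fin d → ℤ) × Q

/-- A vector addition system with states (VASS), given by its set of transitions. -/
structure VASS (d : ℕ) (Q : Type*) where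
  Δ : Set (VTrans d Q)

variable {d : ℕ} {Q : Type*}

/-- A sequence of transitions is a path if consecutive states match. -/
def IsPath (ρ : List (VTrans d Q)) : Prop := ρ.Chain' (fun t t' => t.2.2 = t'.1)

/-- A path of the VASS `V`. -/
def PathIn (V : VASS d Q) (ρ : List (VTrans d Q)) : Prop :=
  IsPath ρ ∧ ∀ t ∈ ρ, t ∈ V.Δ

/-- The path starts at state `s` (any state works for the empty path). -/
def FromState (s : Q) (ρ : List (VTrans d Q)) : Prop :=
  match ρ with
  | [] => True
  | t :: _ => t.1 = s

/-- The last state of the run induced by `ρ` from state `s`. -/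
def endState (s : Q) (ρ : List (VTrans d Q)) : Q := (ρ.map (fun t => t.2.2)).getLastD s

/-- Cast a vector over `ℕ` to a vector over `ℤ`. -/
def ofNatVec (v : Fin d → ℕ) : Fin d → ℤ := fun j => (v j : ℤ)

/-- The `i`-th vector of the ℤ-run induced by the path `ρ` from initial vector `v`. -/
def zrun (v : Fin d → ℤ) (ρ : List (VTrans d Q)) (i : ℕ) : Fin d → ℤ :=
  v + ((ρ.take i).map (fun t => t.2.1)).sum

/-- The last vector of the ℤ-run induced by `ρ` from `v`. -/
def zend (v : Fin d → ℤ) (ρ : List (VTrans d Q)) : Fin d → ℤ := zrun v ρ ρ.length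

/-- One step of the monus semantics: add `z` and truncate at `0` componentwise. -/
def mstep (v : Fin d → ℕ) (z : Fin d → ℤ) : Fin d → ℕ := fun j => ((v j : ℤ) + z j).toNat

/-- The `i`-th vector of the monus run induced by the path `ρ` from initial vector `v`. -/
def mrun (v : Fin d → ℕ) (ρ : List (VTrans d Q)) (i : ℕ) : Fin d → ℕ :=
  (ρ.take i).foldl (fun u t => mstep u t.2.1) v

/-- The last vector of the monus run induced by `ρ` from `v`. -/
def mend (v : Fin d → ℕ) (ρ : List (VTrans d Q)) : Fin d → ℕ := mrun v ρ ρ.length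

/-- The classical run induced by `ρ` from `v` exists: no value of the ℤ-run
drops below zero in any coordinate. -/
def ClassicalOK (v : Fin d → ℕ) (ρ : List (VTrans d Q)) : Prop :=
  ∀ i ≤ ρ.length, ∀ j, 0 ≤ zrun (ofNatVec v) ρ i j

/-- Classical reachability `s(v) →* t(w)`. -/
def ClassicalReach (V : VASS d Q) (s : Q) (v : Fin d → ℕ) (t : Q) (w : Fin d → ℕ) : Prop :=
  ∃ ρ, PathIn V ρ ∧ FromState s ρ ∧ endState s ρ = t ∧ ClassicalOK v ρ ∧
    zend (ofNatVec v) ρ = ofNatVec w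

/-- Reachability in ℤ-semantics `s(v) →ℤ* t(w)`. -/
def ZReach (V : VASS d Q) (s : Q) (v : Fin d → ℤ) (t : Q) (w : Fin d → ℤ) : Prop :=
  ∃ ρ, PathIn V ρ ∧ FromState s ρ ∧ endState s ρ = t ∧ zend v ρ = w

/-- Reachability in monus semantics `s(v) ⇝* t(w)`. -/
def MonusReach (V : VASS d Q) (s : Q) (v : Fin d → ℕ) (t : Q) (w : Fin d → ℕ) : Prop :=
  ∃ ρ, PathIn V ρ ∧ FromState s ρ ∧ endState s ρ = t ∧ mend v ρ = w

/-- Coordinate `j` hits `0` in the ℤ-run (equivalently, classical run) induced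
by `ρ` from `v` (at some index `1 ≤ i ≤ k`). -/
def HitsZeroZ (v : Fin d → ℤ) (ρ : List (VTrans d Q)) (j : Fin d) : Prop :=
  ∃ i, 1 ≤ i ∧ i ≤ ρ.length ∧ zrun v ρ i j = 0

/-- Coordinate `j` hits `0` in the monus run induced by `ρ` from `v`. -/
def HitsZeroM (v : Fin d → ℕ) (ρ : List (VTrans d Q)) (j : Fin d) : Prop :=
  ∃ i, 1 ≤ i ∧ i ≤ ρ.length ∧ mrun v ρ i j = 0

/-- The monus run induced by `ρ` from `v` is lossy: at some step, for some
coordinate, the actual change differs from the transition's update. -/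
def Lossy (v : Fin d → ℕ) (ρ : List (VTrans d Q)) : Prop :=
  ∃ (i : Fin ρ.length) (j : Fin d),
    (mrun v ρ ((i : ℕ) + 1) j : ℤ) ≠ (mrun v ρ (i : ℕ) j : ℤ) + (ρ.get i).2.1 j

/-- `mi ρ s₀ v₀`: the coordinatewise minimum (with `0`) of all values along
the ℤ-run induced by `ρ` from `v`. -/
def mi (v : Fin d → ℤ) (ρ : List (VTrans d Q)) : Fin d → ℤ :=
  fun j => min 0 ((Finset.range (ρ.length + 1)).inf' Finset.nonempty_range_add_one
    (fun i => zrun v ρ i j))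

/-- The reverse VASS: `(p,z,q)` is a transition iff `(q,-z,p)` is one of `V`. -/
def revV (V : VASS d Q) : VASS d Q := ⟨{tr | (tr.2.2, -tr.2.1, tr.1) ∈ V.Δ}⟩

/-- Coverability in monus semantics. -/
def MonusCover (V : VASS d Q) (s : Q) (v : Fin d → ℕ) (t : Q) (w : Fin d → ℕ) : Prop :=
  ∃ w', w ≤ w' ∧ MonusReach V s v t w'

/-- Coverability in classical semantics. -/
def ClassicalCover (V : VASS d Q) (s : Q) (v : Fin d → ℕ) (t : Q) (w : Fin d → ℕ) : Prop :=
  ∃ w', w ≤ w' ∧ ClassicalReach V s v t w'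

lemma zrun_succ' (u : Fin d → ℤ) (ρ : List (VTrans d Q)) (i : ℕ) (h : i < ρ.length) :
    zrun u ρ (i+1) = zrun u ρ i + (ρ.get ⟨i, h⟩).2.1 := by
  unfold zrun
  rw [List.take_succ, List.getElem?_eq_getElem h]
  rw [List.map_append, List.sum_append]
  simp [add_assoc]

lemma mrun_succ' (u : Fin d → ℕ) (ρ : List (VTrans d Q)) (i : ℕ) (h : i < ρ.length) :
    mrun u ρ (i+1) = mstep (mrun u ρ i) (ρ.get ⟨i, h⟩).2.1 := by
  unfold mrun
  rw [List.take_succ, List.getElem?_eq_getElem h]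
  rw [Option.toList_some, List.foldl_append]
  simp

/-- Suppose `v' ≥ v`, the classical run induced by `ρ` from `s(v')`
exists and ends in `t(w)`, and every coordinate either hits `0` in this classical run
or satisfies `v'[j] = v[j]`. Then the monus run induced by `ρ` from `s(v)` also
ends in `t(w)`. -/
theorem stmt8 {d : ℕ} {Q : Type*} (V : VASS d Q) (s t : Q) (ρ : List (VTrans d Q))
    (v v' w : Fin d → ℕ)
    (hpath : PathIn V ρ) (hfrom : FromState s ρ) (hend : endState s ρ = t)
    (hle : v ≤ v') (hok : ClassicalOK v' ρ)
    (hw : zend (ofNatVec v') ρ = ofNatVec w)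
    (hcond : ∀ j : Fin d, HitsZeroZ (ofNatVec v') ρ j ∨ v' j = v j) :
    mend v ρ = w := by
  funext j
  set k := ρ.length with hk
  -- M i ≤ A i for i ≤ k
  have hM0 : (mrun v ρ 0 j : ℤ) = (v j : ℤ) := by simp [mrun]
  have hA0 : zrun (ofNatVec v') ρ 0 j = (v' j : ℤ) := by simp [zrun, ofNatVec]
  have hstepM : ∀ i (h : i < k), (mrun v ρ (i+1) j : ℤ)
      = max ((mrun v ρ i j : ℤ) + (ρ.get ⟨i, h⟩).2.1 j) 0 := by
    intro i h
    rw [mrun_succ' v ρ i h]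
    simp [mstep, Int.toNat_eq_max]
  have hle' : ∀ i ≤ k, (mrun v ρ i j : ℤ) ≤ zrun (ofNatVec v') ρ i j := by
    intro i
    induction i with
    | zero => intro _; rw [hM0, hA0]; exact_mod_cast hle j
    | succ i ih =>
      intro hik
      have hlt : i < k := Nat.lt_of_succ_le hik
      rw [hstepM i hlt, zrun_succ' (ofNatVec v') ρ i hlt]
      have h1 := ih (le_of_lt hlt)
      have h2 := hok (i+1) hik j
      rw [zrun_succ' (ofNatVec v') ρ i hlt] at h2
      simp only [Pi.add_apply] at h2 ⊢
      exact max_le (by linarith) h2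
  -- propagation of equality
  have hprop : ∀ i₀, (mrun v ρ i₀ j : ℤ) = zrun (ofNatVec v') ρ i₀ j →
      ∀ i, i₀ ≤ i → i ≤ k → (mrun v ρ i j : ℤ) = zrun (ofNatVec v') ρ i j := by
    intro i₀ heq i
    induction i with
    | zero => intro h0 _; exact Nat.le_zero.mp h0 ▸ heq
    | succ i ih =>
      intro h0 hik
      rcases Nat.lt_or_ge i₀ (i+1) with hlt' | hge
      · have hi : i₀ ≤ i := Nat.lt_succ_iff.mp hlt'
        have hlt : i < k := Nat.lt_of_succ_le hik
        have hprev := ih hi (le_of_lt hlt)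
        rw [hstepM i hlt, zrun_succ' (ofNatVec v') ρ i hlt, hprev]
        have h2 := hok (i+1) hik j
        rw [zrun_succ' (ofNatVec v') ρ i hlt] at h2
        simp only [Pi.add_apply] at h2 ⊢
        exact max_eq_left h2
      · have : i₀ = i+1 := le_antisymm h0 hge
        exact this ▸ heq
  have hkey : (mrun v ρ k j : ℤ) = zrun (ofNatVec v') ρ k j := by
    rcases hcond j with ⟨i₀, h1, h2, h3⟩ | hvv
    · have hz : (mrun v ρ i₀ j : ℤ) = zrun (ofNatVec v') ρ i₀ j := by
        have := hle' i₀ h2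
        rw [h3] at this ⊢
        have : (mrun v ρ i₀ j : ℤ) = 0 := le_antisymm this (Int.ofNat_nonneg _)
        exact this
      exact hprop i₀ hz k h2 le_rfl
    · refine hprop 0 ?_ k (Nat.zero_le _) le_rfl
      rw [hM0, hA0, hvv]
  have hwj : zrun (ofNatVec v') ρ k j = (w j : ℤ) := by
    have := congrFun hw j
    simpa [zend, ofNatVec] using this
  have : (mend v ρ j : ℤ) = (w j : ℤ) := by
    rw [mend, hkey.trans hwj]
  exact_mod_cast this
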